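/- For patterns of size 2, the nonoverlapping support admits the explicit formula via greedy matching: sup(p_1 p_2, s) = the size of the greedy matching between A = {j : p_1 ⊆ s_j} and B = {j : p_2 ⊆ s_j} (both listed in increasing order), where the greedy matching pairs each element of A, in increasing order, with the smallest unused element of B strictly greater than it. -/

import Mathlib

/-- `IsOcc s p l` : `l` is an occurrence of pattern `p` in sequence `s`:
a strictly increasing list of indices into `s`, of the same length as `p`,
with coordinatewise containment of the pattern itemsets. -/
def IsOcc (s p : List (Finset ℕ)) (l : List ℕ) : Prop :=
  l.length = p.length ∧ l.Chain' (· < ·) ∧ (∀ x ∈ l, x < s.length) ∧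
  ∀ k, k < p.length → p.getD k ∅ ⊆ s.getD (l.getD k 0) ∅

/-- Two occurrences are nonoverlapping iff they differ at every coordinate. -/
def NonOverlap (l l' : List ℕ) : Prop :=
  ∀ k, k < l.length → l.getD k 0 ≠ l'.getD k 0

/-- `supp s p` : the maximum cardinality of a family of pairwise
nonoverlapping occurrences of `p` in `s`. -/
noncomputable def supp (s p : List (Finset ℕ)) : ℕ :=
  sSup {k | ∃ F : Finset (List ℕ), F.card = k ∧ (∀ l ∈ F, IsOcc s p l) ∧
    (F : Set (List ℕ)).Pairwise NonOverlap}

/-- Support of a pattern in a database: sum of supports over the sequences. -/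
noncomputable def suppD (D : List (List (Finset ℕ))) (p : List (Finset ℕ)) : ℕ :=
  (D.map (fun s => supp s p)).sum

/-- Greedy matching: scan `A` in order; match each element to the smallest
not-yet-used element of `B` exceeding it (for sorted `B`, `find?` returns
the smallest such element). -/
def greedyMatch : List ℕ → List ℕ → List (ℕ × ℕ)
  | [], _ => []
  | i :: A, B =>
    match B.find? (fun j => decide (i < j)) with
    | none => greedyMatch A B
    | some j => (i, j) :: greedyMatch A (B.erase j)

/-- A matching between `A` and `B`: pairs `(i, j)` with `i ∈ A`, `j ∈ B`,
`i < j`, with all first coordinates distinct and all second coordinates distinct. -/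
def IsMatching (A B : List ℕ) (M : Finset (ℕ × ℕ)) : Prop :=
  (∀ q ∈ M, q.1 ∈ A ∧ q.2 ∈ B ∧ q.1 < q.2) ∧
  Set.InjOn Prod.fst (M : Set (ℕ × ℕ)) ∧ Set.InjOn Prod.snd (M : Set (ℕ × ℕ))


theorem gm_mem : ∀ (A B : List ℕ), ∀ q ∈ greedyMatch A B, q.1 ∈ A ∧ q.2 ∈ B ∧ q.1 < q.2
  | [], _ => by simp [greedyMatch]
  | i :: A, B => by
    intro q hq
    rw [greedyMatch] at hq
    rcases hf : B.find? (fun j => decide (i < j)) with _ | j <;> rw [hf] at hq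
    · obtain ⟨h1, h2, h3⟩ := gm_mem A B q hq
      exact ⟨List.mem_cons_of_mem _ h1, h2, h3⟩
    · have hjB : j ∈ B := List.mem_of_find?_eq_some hf
      have hij : i < j := by simpa using List.find?_some hf
      rcases List.mem_cons.1 hq with rfl | hq
      · exact ⟨List.mem_cons_self, hjB, hij⟩
      · obtain ⟨h1, h2, h3⟩ := gm_mem A (B.erase j) q hq
        exact ⟨List.mem_cons_of_mem _ h1, (List.erase_sublist (l := B) (a := j)).mem h2, h3⟩

theorem gm_fst_sublist : ∀ (A B : List ℕ), ((greedyMatch A B).map Prod.fst).Sublist A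
  | [], _ => by simp [greedyMatch]
  | i :: A, B => by
    rw [greedyMatch]
    rcases hf : B.find? (fun j => decide (i < j)) with _ | j
    · exact (gm_fst_sublist A B).trans (List.sublist_cons_self _ _)
    · simpa using (gm_fst_sublist A (B.erase j)).cons₂ i

theorem gm_snd_nodup : ∀ (A B : List ℕ), B.Nodup → ((greedyMatch A B).map Prod.snd).Nodup
  | [], _ => by simp [greedyMatch]
  | i :: A, B => by
    intro hB
    rw [greedyMatch]
    rcases hf : B.find? (fun j => decide (i < j)) with _ | j
    · exact gm_snd_nodup A B hB
    · simp only [List.map_cons, List.nodup_cons]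
      refine ⟨fun hc => ?_, gm_snd_nodup A (B.erase j) (hB.erase j)⟩
      simp only [List.mem_map] at hc
      obtain ⟨q, hq, hq2⟩ := hc
      have := (gm_mem A (B.erase j) q hq).2.1
      rw [hq2] at this
      exact (List.Nodup.not_mem_erase hB) this

theorem find_min : ∀ {B : List ℕ}, B.Pairwise (· < ·) → ∀ {i j : ℕ},
    B.find? (fun x => decide (i < x)) = some j → ∀ j' ∈ B, i < j' → j ≤ j'
  | [], _, _, _, h => by simp at h
  | b :: B, hs, i, j, h => by
    intro j' hj' hij'
    by_cases hib : i < b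
    · rw [List.find?_cons_of_pos (by simpa using hib)] at h
      injection h with h; subst h
      rcases List.mem_cons.1 hj' with rfl | hj'
      · exact le_refl _
      · exact le_of_lt ((List.pairwise_cons.1 hs).1 _ hj')
    · rw [List.find?_cons_of_neg (by simpa using hib)] at h
      rcases List.mem_cons.1 hj' with rfl | hj'
      · exact absurd hij' hib
      · exact find_min (List.pairwise_cons.1 hs).2 h j' hj' hij'

/-- helper: restricting a matching. -/
theorem matching_shrink {i j : ℕ} {A B : List ℕ} {M M' : Finset (ℕ × ℕ)}
    (hM : IsMatching (i :: A) B M) (hsub : M' ⊆ M)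
    (hcond : ∀ q ∈ M', q.1 ≠ i ∧ q.2 ≠ j) : IsMatching A (B.erase j) M' := by
  obtain ⟨hmem, hf, hs⟩ := hM
  refine ⟨fun q hq => ?_, hf.mono (by exact_mod_cast hsub), hs.mono (by exact_mod_cast hsub)⟩
  obtain ⟨h1, h2, h3⟩ := hmem q (hsub hq)
  obtain ⟨hc1, hc2⟩ := hcond q hq
  refine ⟨?_, (List.mem_erase_of_ne hc2).2 h2, h3⟩
  rcases List.mem_cons.1 h1 with h | h
  · exact absurd h hc1
  · exact h

theorem gm_opt : ∀ (A B : List ℕ), B.Pairwise (· < ·) → ∀ M : Finset (ℕ × ℕ),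
    IsMatching A B M → M.card ≤ (greedyMatch A B).length
  | [], B, _, M, hM => by
    have : M = ∅ := by
      ext q
      simp only [Finset.notMem_empty, iff_false]
      intro hq
      simpa using (hM.1 q hq).1
    simp [this, greedyMatch]
  | i :: A, B, hB, M, hM => by
    have hBe : ∀ j, (B.erase j).Pairwise (· < ·) := fun j => hB.sublist (List.erase_sublist (l := B) (a := j))
    rw [greedyMatch]
    rcases hf : B.find? (fun j => decide (i < j)) with _ | j
    · -- no partner for i : M avoids i
      rw [List.find?_eq_none] at hf
      refine gm_opt A B hB M ⟨fun q hq => ?_, hM.2.1, hM.2.2⟩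
      obtain ⟨h1, h2, h3⟩ := hM.1 q hq
      rcases List.mem_cons.1 h1 with h | h
      · exact absurd (by simpa using hf q.2 h2) (not_not.2 (h ▸ h3))
      · exact ⟨h, h2, h3⟩
    · have hjB : j ∈ B := List.mem_of_find?_eq_some hf
      have hij : i < j := by simpa using List.find?_some hf
      have hmin : ∀ j' ∈ B, i < j' → j ≤ j' := find_min hB hf
      simp only [List.length_cons]
      have key : ∃ M' : Finset (ℕ × ℕ), IsMatching A (B.erase j) M' ∧ M.card ≤ M'.card + 1 := by
        by_cases hi : ∃ b, (i, b) ∈ M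
        · obtain ⟨b, hb⟩ := hi
          by_cases hbj : b = j
          · subst hbj
            refine ⟨M.erase (i, b), matching_shrink hM (M.erase_subset _) ?_, ?_⟩
            · intro q hq
              obtain ⟨hne, hqM⟩ := Finset.mem_erase.1 hq
              constructor
              · intro h
                exact hne (hM.2.1 (Finset.mem_coe.2 hqM) (Finset.mem_coe.2 hb) (by simp [h]))
              · intro h
                exact hne (hM.2.2 (Finset.mem_coe.2 hqM) (Finset.mem_coe.2 hb) (by simp [h]))
            · have := Finset.card_erase_of_mem hb
              have := Finset.card_pos.2 ⟨_, hb⟩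
              omega
          · have hib : i < b := (hM.1 _ hb).2.2
            have hbB : b ∈ B := (hM.1 _ hb).2.1
            have hjb : j < b := lt_of_le_of_ne (hmin b hbB hib) (Ne.symm hbj)
            by_cases hj : ∃ a, (a, j) ∈ M
            · obtain ⟨a, ha⟩ := hj
              have hai : a ≠ i := by
                intro h; subst h
                exact hbj (congrArg Prod.snd (hM.2.1 (Finset.mem_coe.2 hb) (Finset.mem_coe.2 ha) rfl))
              have haA : a ∈ A := by
                rcases List.mem_cons.1 (hM.1 _ ha).1 with h | h
                · exact absurd h hai
                · exact h
              have haj : a < j := (hM.1 _ ha).2.2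
              set M₀ := (M.erase (i, b)).erase (a, j) with hM₀
              have hM₀sub : M₀ ⊆ M := (Finset.erase_subset _ _).trans (Finset.erase_subset _ _)
              have hM₀cond : ∀ q ∈ M₀, q.1 ≠ i ∧ q.2 ≠ j := by
                intro q hq
                obtain ⟨hne1, hq'⟩ := Finset.mem_erase.1 hq
                obtain ⟨hne2, hqM⟩ := Finset.mem_erase.1 hq'
                constructor
                · intro h
                  exact hne2 (hM.2.1 (Finset.mem_coe.2 hqM) (Finset.mem_coe.2 hb) (by simp [h]))
                · intro h
                  exact hne1 (hM.2.2 (Finset.mem_coe.2 hqM) (Finset.mem_coe.2 ha) (by simp [h]))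
              have hmatch₀ := matching_shrink hM hM₀sub hM₀cond
              have habM : (a, b) ∉ M := by
                intro h
                exact hai (congrArg Prod.fst (hM.2.2 (Finset.mem_coe.2 h) (Finset.mem_coe.2 hb) rfl))
              refine ⟨insert (a, b) M₀, ⟨?_, ?_, ?_⟩, ?_⟩
              · intro q hq
                rcases Finset.mem_insert.1 hq with rfl | hq
                · exact ⟨haA, (List.mem_erase_of_ne (Ne.symm (Nat.ne_of_lt hjb))).2 hbB,
                    lt_trans haj hjb⟩
                · exact hmatch₀.1 q hq
              · intro q hq q' hq' hfst
                rw [Finset.mem_coe, Finset.mem_insert] at hq hq'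
                rcases hq with rfl | hq <;> rcases hq' with rfl | hq'
                · rfl
                · exfalso
                  have : q' = (a, j) := hM.2.1 (Finset.mem_coe.2 (hM₀sub hq'))
                    (Finset.mem_coe.2 ha) (by simp [← hfst])
                  exact (Finset.mem_erase.1 hq').1 this
                · exfalso
                  have : q = (a, j) := hM.2.1 (Finset.mem_coe.2 (hM₀sub hq))
                    (Finset.mem_coe.2 ha) (by simp [hfst])
                  exact (Finset.mem_erase.1 hq).1 this
                · exact hmatch₀.2.1 (Finset.mem_coe.2 hq) (Finset.mem_coe.2 hq') hfst
              · intro q hq q' hq' hsnd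
                rw [Finset.mem_coe, Finset.mem_insert] at hq hq'
                rcases hq with rfl | hq <;> rcases hq' with rfl | hq'
                · rfl
                · exfalso
                  have : q' = (i, b) := hM.2.2 (Finset.mem_coe.2 (hM₀sub hq'))
                    (Finset.mem_coe.2 hb) (by simp [← hsnd])
                  exact (Finset.mem_erase.1 ((Finset.mem_erase.1 hq').2)).1 this
                · exfalso
                  have : q = (i, b) := hM.2.2 (Finset.mem_coe.2 (hM₀sub hq))
                    (Finset.mem_coe.2 hb) (by simp [hsnd])
                  exact (Finset.mem_erase.1 ((Finset.mem_erase.1 hq).2)).1 this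
                · exact hmatch₀.2.2 (Finset.mem_coe.2 hq) (Finset.mem_coe.2 hq') hsnd
              · have hne : ((a, j) : ℕ × ℕ) ≠ (i, b) := by
                  intro h; exact hai (congrArg Prod.fst h)
                have h1 : (a, j) ∈ M.erase (i, b) := Finset.mem_erase.2 ⟨hne, ha⟩
                have hc1 := Finset.card_erase_of_mem hb
                have hc2 : M₀.card = (M.erase (i, b)).card - 1 := Finset.card_erase_of_mem h1
                have hc3 := Finset.card_insert_of_notMem (fun h => habM (hM₀sub h))
                have hp1 := Finset.card_pos.2 ⟨_, hb⟩
                have hp2 := Finset.card_pos.2 ⟨_, h1⟩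
                omega
            · -- i matched to b, j unused
              refine ⟨M.erase (i, b), matching_shrink hM (M.erase_subset _) ?_, ?_⟩
              · intro q hq
                obtain ⟨hne, hqM⟩ := Finset.mem_erase.1 hq
                constructor
                · intro h
                  exact hne (hM.2.1 (Finset.mem_coe.2 hqM) (Finset.mem_coe.2 hb) (by simp [h]))
                · intro h
                  exact hj ⟨q.1, by rwa [show (q.1, j) = q by ext <;> simp [h]]⟩
              · have := Finset.card_erase_of_mem hb
                have := Finset.card_pos.2 ⟨_, hb⟩
                omega
        · by_cases hj : ∃ a, (a, j) ∈ M
          · obtain ⟨a, ha⟩ := hj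
            refine ⟨M.erase (a, j), matching_shrink hM (M.erase_subset _) ?_, ?_⟩
            · intro q hq
              obtain ⟨hne, hqM⟩ := Finset.mem_erase.1 hq
              constructor
              · intro h
                exact hi ⟨q.2, by rwa [show (i, q.2) = q by ext <;> simp [h]]⟩
              · intro h
                exact hne (hM.2.2 (Finset.mem_coe.2 hqM) (Finset.mem_coe.2 ha) (by simp [h]))
            · have := Finset.card_erase_of_mem ha
              have := Finset.card_pos.2 ⟨_, ha⟩
              omega
          · refine ⟨M, matching_shrink hM (subset_refl _) ?_, Nat.le_succ _⟩
            intro q hq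
            exact ⟨fun h => hi ⟨q.2, by rwa [show (i, q.2) = q by ext <;> simp [h]]⟩,
              fun h => hj ⟨q.1, by rwa [show (q.1, j) = q by ext <;> simp [h]]⟩⟩
      obtain ⟨M', hM', hcard⟩ := key
      exact le_trans hcard (Nat.succ_le_succ (gm_opt A (B.erase j) (hBe j) M' hM'))

theorem occ2_iff (s : List (Finset ℕ)) (p1 p2 : Finset ℕ) (l : List ℕ) :
    IsOcc s [p1, p2] l ↔ ∃ i j, l = [i, j] ∧ (i < s.length ∧ p1 ⊆ s.getD i ∅) ∧
      (j < s.length ∧ p2 ⊆ s.getD j ∅) ∧ i < j := by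
  constructor
  · rintro ⟨hlen, hch, hbd, hsub⟩
    rcases l with _ | ⟨i, _ | ⟨j, _ | _⟩⟩ <;> simp at hlen
    have h0 := hsub 0 (by norm_num)
    have h1 := hsub 1 (by norm_num)
    simp only [List.getD_cons_zero, List.getD_cons_succ] at h0 h1
    exact ⟨i, j, rfl, ⟨hbd i (by simp), h0⟩, ⟨hbd j (by simp), h1⟩,
      (List.isChain_cons_cons.1 hch).1⟩
  · rintro ⟨i, j, rfl, ⟨hi1, hi2⟩, ⟨hj1, hj2⟩, hij⟩
    refine ⟨by simp, by exact List.isChain_pair.2 hij, by simp [hi1, hj1], ?_⟩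
    intro k hk
    simp only [List.length_cons, List.length_nil] at hk
    interval_cases k <;> simp only [List.getD_cons_zero, List.getD_cons_succ] <;> assumption

theorem mem_filter_iff (s : List (Finset ℕ)) (p : Finset ℕ) (j : ℕ) :
    j ∈ (List.range s.length).filter (fun j => decide (p ⊆ s.getD j ∅)) ↔
      j < s.length ∧ p ⊆ s.getD j ∅ := by
  simp [List.mem_filter, List.mem_range]

theorem stmt11 (s : List (Finset ℕ)) (p1 p2 : Finset ℕ) :
    supp s [p1, p2] =
      (greedyMatch
        ((List.range s.length).filter (fun j => decide (p1 ⊆ s.getD j ∅)))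
        ((List.range s.length).filter (fun j => decide (p2 ⊆ s.getD j ∅)))).length := by
  set A := (List.range s.length).filter (fun j => decide (p1 ⊆ s.getD j ∅)) with hA
  set B := (List.range s.length).filter (fun j => decide (p2 ⊆ s.getD j ∅)) with hB
  have hAsort : A.Pairwise (· < ·) :=
    List.pairwise_lt_range.sublist List.filter_sublist
  have hBsort : B.Pairwise (· < ·) :=
    List.pairwise_lt_range.sublist List.filter_sublist
  have hAnd : A.Nodup := hAsort.imp ne_of_lt
  have hBnd : B.Nodup := hBsort.imp ne_of_lt
  set N := (greedyMatch A B).length with hN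
  set S := {k | ∃ F : Finset (List ℕ), F.card = k ∧ (∀ l ∈ F, IsOcc s [p1, p2] l) ∧
    (F : Set (List ℕ)).Pairwise NonOverlap} with hS
  -- upper bound
  have hub : ∀ k ∈ S, k ≤ N := by
    rintro k ⟨F, rfl, hocc, hpw⟩
    have hform : ∀ l ∈ F, ∃ i j, l = [i, j] ∧ i ∈ A ∧ j ∈ B ∧ i < j := by
      intro l hl
      obtain ⟨i, j, rfl, h1, h2, h3⟩ := (occ2_iff s p1 p2 l).1 (hocc l hl)
      exact ⟨i, j, rfl, (mem_filter_iff s p1 i).2 h1, (mem_filter_iff s p2 j).2 h2, h3⟩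
    set f : List ℕ → ℕ × ℕ := fun l => (l.getD 0 0, l.getD 1 0) with hfdef
    have hinj : Set.InjOn f (F : Set (List ℕ)) := by
      intro l hl l' hl' heq
      obtain ⟨i, j, rfl, -, -, -⟩ := hform l hl
      obtain ⟨i', j', rfl, -, -, -⟩ := hform l' hl'
      simp only [hfdef, List.getD_cons_zero, List.getD_cons_succ, Prod.mk.injEq] at heq
      simp [heq.1, heq.2]
    set M := F.image f with hM
    have hcard : M.card = F.card := Finset.card_image_of_injOn hinj
    have hmatch : IsMatching A B M := by
      refine ⟨?_, ?_, ?_⟩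
      · intro q hq
        obtain ⟨l, hl, rfl⟩ := Finset.mem_image.1 hq
        obtain ⟨i, j, rfl, h1, h2, h3⟩ := hform l hl
        simpa [hfdef] using ⟨h1, h2, h3⟩
      · intro q hq q' hq' heq
        obtain ⟨l, hl, rfl⟩ := Finset.mem_image.1 (Finset.mem_coe.1 hq)
        obtain ⟨l', hl', rfl⟩ := Finset.mem_image.1 (Finset.mem_coe.1 hq')
        by_cases hll : l = l'
        · rw [hll]
        · exfalso
          obtain ⟨i, j, hlij, -, -, -⟩ := hform l hl
          have := hpw (Finset.mem_coe.2 hl) (Finset.mem_coe.2 hl') hll 0 (by simp [hlij])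
          exact this heq
      · intro q hq q' hq' heq
        obtain ⟨l, hl, rfl⟩ := Finset.mem_image.1 (Finset.mem_coe.1 hq)
        obtain ⟨l', hl', rfl⟩ := Finset.mem_image.1 (Finset.mem_coe.1 hq')
        by_cases hll : l = l'
        · rw [hll]
        · exfalso
          obtain ⟨i, j, hlij, -, -, -⟩ := hform l hl
          have := hpw (Finset.mem_coe.2 hl) (Finset.mem_coe.2 hl') hll 1 (by simp [hlij])
          exact this heq
    calc F.card = M.card := hcard.symm
    _ ≤ N := gm_opt A B hBsort M hmatch
  -- lower bound : N ∈ S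
  have hgnd : (greedyMatch A B).Nodup :=
    List.Nodup.of_map Prod.fst ((gm_fst_sublist A B).nodup hAnd)
  have hfin : Function.Injective (fun q : ℕ × ℕ => [q.1, q.2]) := by
    intro q r h
    simp only [List.cons.injEq, and_true] at h
    exact Prod.ext h.1 h.2
  have hmapnd : ((greedyMatch A B).map (fun q => [q.1, q.2])).Nodup := hgnd.map hfin
  have hNS : N ∈ S := by
    refine ⟨((greedyMatch A B).map (fun q => [q.1, q.2])).toFinset, ?_, ?_, ?_⟩
    · rw [List.toFinset_card_of_nodup hmapnd, List.length_map]
    · intro l hl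
      rw [List.mem_toFinset, List.mem_map] at hl
      obtain ⟨q, hq, rfl⟩ := hl
      obtain ⟨h1, h2, h3⟩ := gm_mem A B q hq
      rw [mem_filter_iff] at h1 h2
      exact (occ2_iff s p1 p2 _).2 ⟨q.1, q.2, rfl, h1, h2, h3⟩
    · intro l hl l' hl' hne
      rw [Finset.mem_coe, List.mem_toFinset, List.mem_map] at hl hl'
      obtain ⟨q, hq, rfl⟩ := hl
      obtain ⟨q', hq', rfl⟩ := hl'
      have hqq : q ≠ q' := fun h => hne (by rw [h])
      intro k hk
      simp only [List.length_cons, List.length_nil] at hk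
      interval_cases k
      · simp only [List.getD_cons_zero]
        intro h
        exact hqq (List.inj_on_of_nodup_map ((gm_fst_sublist A B).nodup hAnd) hq hq' h)
      · simp only [List.getD_cons_succ, List.getD_cons_zero]
        intro h
        exact hqq (List.inj_on_of_nodup_map (gm_snd_nodup A B hBnd) hq hq' h)
  have h0S : (0 : ℕ) ∈ S := ⟨∅, by simp, by simp, by simp⟩
  show sSup S = N
  exact le_antisymm (csSup_le ⟨0, h0S⟩ hub) (le_csSup ⟨N, hub⟩ hNS)
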